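/- arXiv:1811.05639 — 2 statements merged into one kernel-verified Lean document; each statement's English description precedes it below -/
import Mathlib

section
/- A (general, not necessarily Gaussian) stochastic sequence [x_0,...,x_N] is reciprocal if and only if it is [k1,N]-CM_F for every k1 in [0,N] and CM_L; equivalently, if and only if it is [0,k2]-CM_L for every k2 in [0,N] and CM_F. -/
set_option maxRecDepth 8000


open MeasureTheory ProbabilityTheory Matrix

namespace CMPaper

variable {Ω : Type*}

/-- `x` is a jointly Gaussian family with mean `m` and covariance matrix `C`:
every linear combination of the components is a one-dimensional Gaussian variable
with the induced mean and variance. -/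
def IsGaussianFamily [MeasurableSpace Ω] {ι : Type*} [Fintype ι] (μ : Measure Ω)
    (x : ι → Ω → ℝ) (m : ι → ℝ) (C : Matrix ι ι ℝ) : Prop :=
  ∀ a : ι → ℝ,
    Measure.map (fun ω => ∑ i, a i * x i ω) μ =
      gaussianReal (∑ i, a i * m i) (Real.toNNReal (∑ i, ∑ j, a i * C i j * a j))

variable {N d : ℕ}

/-- The family of scalar components of a sequence of random vectors. -/
def flat (X : Fin (N + 1) → Ω → (Fin d → ℝ)) : Fin (N + 1) × Fin d → Ω → ℝ :=
  fun p ω => X p.1 ω p.2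

/-- Markov property: conditioned on `x_j`, `x_k` (k > j) is independent of the past. -/
def IsMarkovSeq [MeasurableSpace Ω] [StandardBorelSpace Ω] (μ : Measure Ω) [IsFiniteMeasure μ]
    (X : Fin (N + 1) → Ω → (Fin d → ℝ)) (hX : ∀ k, Measurable (X k)) : Prop :=
  ∀ j k : Fin (N + 1), j < k →
    CondIndepFun (MeasurableSpace.comap (X j) inferInstance) ((hX j).comap_le)
      (X k) (fun ω (i : {i : Fin (N + 1) // i < j}) => X i.1 ω) μ

/-- Reciprocal property: conditioned on `(x_{k1}, x_{k2})`, the subsequences inside and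
outside of `[k1, k2]` are independent. -/
def IsReciprocalSeq [MeasurableSpace Ω] [StandardBorelSpace Ω] (μ : Measure Ω)
    [IsFiniteMeasure μ]
    (X : Fin (N + 1) → Ω → (Fin d → ℝ)) (hX : ∀ k, Measurable (X k)) : Prop :=
  ∀ k1 k2 : Fin (N + 1), k1 < k2 →
    CondIndepFun (MeasurableSpace.comap (fun ω => (X k1 ω, X k2 ω)) inferInstance)
      (((hX k1).prodMk (hX k2)).comap_le)
      (fun ω (i : {i : Fin (N + 1) // k1 < i ∧ i < k2}) => X i.1 ω)
      (fun ω (i : {i : Fin (N + 1) // i < k1 ∨ k2 < i}) => X i.1 ω) μ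

/-- `[k1,k2]`-CM_c property: for `k1 ≤ j < k ≤ k2`, conditioned on `(x_j, x_c)`,
`x_k` is independent of `[x_i]_{k1}^{j-1}`. -/
def IsCMcOn [MeasurableSpace Ω] [StandardBorelSpace Ω] (μ : Measure Ω) [IsFiniteMeasure μ]
    (X : Fin (N + 1) → Ω → (Fin d → ℝ)) (hX : ∀ k, Measurable (X k))
    (k1 k2 c : Fin (N + 1)) : Prop :=
  ∀ j k : Fin (N + 1), k1 ≤ j → j < k → k ≤ k2 →
    CondIndepFun (MeasurableSpace.comap (fun ω => (X j ω, X c ω)) inferInstance)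
      (((hX j).prodMk (hX c)).comap_le)
      (X k) (fun ω (i : {i : Fin (N + 1) // k1 ≤ i ∧ i < j}) => X i.1 ω) μ

/-- The `(i,j)` block (of size `d × d`) of a matrix indexed by `Fin (N+1) × Fin d`. -/
def BlockOf (M : Matrix (Fin (N + 1) × Fin d) (Fin (N + 1) × Fin d) ℝ)
    (i j : Fin (N + 1)) : Matrix (Fin d) (Fin d) ℝ :=
  fun a b => M (i, a) (j, b)

/-- Block positions `(i,j)` with `|i - j| ≥ 2`. -/
def OffBand (i j : Fin (N + 1)) : Prop := i.1 + 2 ≤ j.1 ∨ j.1 + 2 ≤ i.1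

/-- CM_L form: zero blocks off the tridiagonal band, except in the last block row/column. -/
def IsCMLFormB (M : Matrix (Fin (N + 1) × Fin d) (Fin (N + 1) × Fin d) ℝ) : Prop :=
  ∀ i j : Fin (N + 1), OffBand i j → i ≠ Fin.last N → j ≠ Fin.last N → BlockOf M i j = 0

/-- CM_F form: zero blocks off the tridiagonal band, except in the first block row/column. -/
def IsCMFFormB (M : Matrix (Fin (N + 1) × Fin d) (Fin (N + 1) × Fin d) ℝ) : Prop :=
  ∀ i j : Fin (N + 1), OffBand i j → i ≠ 0 → j ≠ 0 → BlockOf M i j = 0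

/-- Cyclic (block) tridiagonal form: zero blocks off the tridiagonal band,
except possibly the corner blocks `(0, N)` and `(N, 0)`. -/
def IsCyclicTridiagB (M : Matrix (Fin (N + 1) × Fin d) (Fin (N + 1) × Fin d) ℝ) : Prop :=
  ∀ i j : Fin (N + 1), OffBand i j → ¬(i = 0 ∧ j = Fin.last N) → ¬(i = Fin.last N ∧ j = 0) →
    BlockOf M i j = 0

/-- Block tridiagonal form: zero blocks off the tridiagonal band. -/
def IsTridiagB (M : Matrix (Fin (N + 1) × Fin d) (Fin (N + 1) × Fin d) ℝ) : Prop :=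
  ∀ i j : Fin (N + 1), OffBand i j → BlockOf M i j = 0

/-- Build a scalar matrix from a block description. -/
def ofBlocks (B : Fin (N + 1) → Fin (N + 1) → Matrix (Fin d) (Fin d) ℝ) :
    Matrix (Fin (N + 1) × Fin d) (Fin (N + 1) × Fin d) ℝ :=
  fun p q => B p.1 q.1 p.2 q.2

end CMPaper

namespace CMPaper

variable {N d : ℕ}

/-- Block-diagonal noise covariance matrix `diag(G_0, …, G_N)`. -/
def noiseCov (Gk : Fin (N + 1) → Matrix (Fin d) (Fin d) ℝ) :
    Matrix (Fin (N + 1) × Fin d) (Fin (N + 1) × Fin d) ℝ :=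
  ofBlocks (fun i j => if i = j then Gk i else 0)

/-- The block matrix `𝓖` of the forward CM_L model with boundary condition
`x_0 = e_0`, `x_N = G_{N,0} x_0 + e_N`: identity diagonal, `-F k = -G_{k,k-1}` on the
subdiagonal for `k = 1, …, N-1`, `-H k = -G_{k,N}` in the last block column for
`k = 1, …, N-1`, and `-K = -G_{N,0}` at position `(N, 0)`. -/
def cmlModelMatBC1 (F H : Fin (N + 1) → Matrix (Fin d) (Fin d) ℝ)
    (K : Matrix (Fin d) (Fin d) ℝ) :
    Matrix (Fin (N + 1) × Fin d) (Fin (N + 1) × Fin d) ℝ :=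
  ofBlocks (fun i j =>
    if i = j then 1
    else if j.1 + 1 = i.1 ∧ i ≠ Fin.last N then -(F i)
    else if j = Fin.last N ∧ i ≠ Fin.last N ∧ i ≠ 0 then -(H i)
    else if i = Fin.last N ∧ j = 0 then -K
    else 0)

/-- The block matrix `𝓖` of the forward CM_L model with boundary condition
`x_N = e_N`, `x_0 = G_{0,N} x_N + e_0`: identity diagonal, `-F k = -G_{k,k-1}` on the
subdiagonal for `k = 1, …, N-1`, and `-H k = -G_{k,N}` in the last block column for
`k = 0, …, N-1`. -/
def cmlModelMatBC2 (F H : Fin (N + 1) → Matrix (Fin d) (Fin d) ℝ) :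
    Matrix (Fin (N + 1) × Fin d) (Fin (N + 1) × Fin d) ℝ :=
  ofBlocks (fun i j =>
    if i = j then 1
    else if j.1 + 1 = i.1 ∧ i ≠ Fin.last N then -(F i)
    else if j = Fin.last N ∧ i ≠ Fin.last N then -(H i)
    else 0)

/-- The block matrix `𝓕` of the forward CM_F model: identity diagonal, `-2 G_{1,0}` at
`(1,0)`, `-Gsub k = -G_{k,k-1}` on the subdiagonal for `k = 2, …, N`, and
`-Gcol k = -G_{k,0}` in the first block column for `k = 2, …, N`. -/
def cmfModelMat (Gsub Gcol : Fin (N + 1) → Matrix (Fin d) (Fin d) ℝ) :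
    Matrix (Fin (N + 1) × Fin d) (Fin (N + 1) × Fin d) ℝ :=
  ofBlocks (fun i j =>
    if i = j then 1
    else if i.1 = 1 ∧ j = 0 then -(2 • Gsub i)
    else if j.1 + 1 = i.1 then -(Gsub i)
    else if j = 0 ∧ 2 ≤ i.1 then -(Gcol i)
    else 0)

end CMPaper


open MeasureTheory ProbabilityTheory MeasurableSpace Set

namespace CMAux

variable {Ω : Type*}

noncomputable def ind (s : Set Ω) : Ω → ℝ := s.indicator (fun _ => (1:ℝ))

lemma ind_meas {m : MeasurableSpace Ω} {s : Set Ω} (hs : MeasurableSet[m] s) :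
    StronglyMeasurable[m] (ind s) :=
  stronglyMeasurable_const.indicator hs

lemma ind_int {mΩ : MeasurableSpace Ω} {μ : Measure Ω} [IsFiniteMeasure μ] {s : Set Ω}
    (hs : MeasurableSet[mΩ] s) : Integrable (ind s) μ :=
  (integrable_const 1).indicator hs

lemma ind_bdd (s : Set Ω) (x : Ω) : ‖ind s x‖ ≤ 1 := by
  by_cases hx : x ∈ s <;> simp [ind, Set.indicator_of_mem, Set.indicator_of_notMem, hx]

lemma ind_inter (s t : Set Ω) : ind (s ∩ t) = ind s * ind t := by
  simpa [ind, Pi.one_def] using Set.inter_indicator_one (s := s) (t := t) (M₀ := ℝ)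

lemma condexp_eval {mΩ : MeasurableSpace Ω} {μ : Measure Ω} {m : MeasurableSpace Ω} {s : Set Ω} :
    (μ⟦s | m⟧ : Ω → ℝ) = μ[ind s | m] := rfl

end CMAux

namespace CMAux2
set_option linter.unusedSectionVars false

open CMAux

variable {Ω : Type*} {m' m₁ m₂ m₃ : MeasurableSpace Ω} {mΩ : MeasurableSpace Ω}
  [StandardBorelSpace Ω] {μ : Measure Ω} [IsProbabilityMeasure μ]

theorem doob (hm' : m' ≤ mΩ) (hm₁ : m₁ ≤ mΩ) (hm₂ : m₂ ≤ mΩ) :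
    CondIndep m' m₁ m₂ hm' μ ↔
      ∀ s, MeasurableSet[m₁] s →
        (μ[ind s | m' ⊔ m₂]) =ᵐ[μ] (μ[ind s | m']) := by
  have hsub : m' ⊔ m₂ ≤ mΩ := sup_le hm' hm₂
  constructor
  · intro h s hs
    have hprod := (condIndep_iff m' m₁ m₂ hm' hm₁ hm₂ μ).mp h
    have hsΩ : MeasurableSet[mΩ] s := hm₁ s hs
    -- uniqueness of conditional expectation
    have key : (μ[ind s | m']) =ᵐ[μ] μ[ind s | m' ⊔ m₂] := by
      refine ae_eq_condExp_of_forall_setIntegral_eq hsub (ind_int hsΩ)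
        (fun A hA _ => integrable_condExp.integrableOn) ?_
        (((stronglyMeasurable_condExp (m := m') (μ := μ) (f := ind s)).mono
          (le_sup_left : m' ≤ m' ⊔ m₂)).aestronglyMeasurable (μ := μ))
      intro A hA _
      -- π-system induction
      let π : Set (Set Ω) := {u | ∃ B t, MeasurableSet[m'] B ∧ MeasurableSet[m₂] t ∧ u = B ∩ t}
      have h_eq : m' ⊔ m₂ = MeasurableSpace.generateFrom π := by
        refine le_antisymm (sup_le ?_ ?_) (MeasurableSpace.generateFrom_le ?_)
        · intro B hB
          exact measurableSet_generateFrom ⟨B, Set.univ, hB, MeasurableSet.univ,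
            (Set.inter_univ B).symm⟩
        · intro t ht
          exact measurableSet_generateFrom ⟨Set.univ, t, MeasurableSet.univ, ht,
            (Set.univ_inter t).symm⟩
        · rintro u ⟨B, t, hB, ht, rfl⟩
          exact (le_sup_left (a := m') (b := m₂) B hB).inter
            (le_sup_right (a := m') (b := m₂) t ht)
      have h_pi : IsPiSystem π := by
        rintro u ⟨B1, t1, hB1, ht1, rfl⟩ v ⟨B2, t2, hB2, ht2, rfl⟩ -
        exact ⟨B1 ∩ B2, t1 ∩ t2, hB1.inter hB2, ht1.inter ht2, by ext x; simp; tauto⟩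
      refine MeasurableSpace.induction_on_inter (m := m' ⊔ m₂)
        (C := fun A _ => ∫ x in A, (μ[ind s | m']) x ∂μ = ∫ x in A, ind s x ∂μ)
        h_eq h_pi (by simp) ?_ ?_ ?_ _ hA
      · -- basic
        rintro u ⟨B, t, hB, ht, rfl⟩
        have hBΩ : MeasurableSet[mΩ] B := hm' B hB
        have htΩ : MeasurableSet[mΩ] t := hm₂ t ht
        have hint_tg : Integrable (fun x => ind t x * (μ[ind s | m']) x) μ :=
          integrable_condExp.bdd_mul (ind_meas htΩ).aestronglyMeasurable (Filter.Eventually.of_forall (ind_bdd t))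
        have e2 : t.indicator (μ[ind s | m']) = fun x => ind t x * (μ[ind s | m']) x := by
          funext x; by_cases hx : x ∈ t <;> simp [ind, hx]
        have e4 : (μ[fun x => ind t x * (μ[ind s | m']) x | m'])
            =ᵐ[μ] μ[ind (s ∩ t) | m'] := by
          have pull : (μ[(μ[ind s | m']) * ind t | m'])
              =ᵐ[μ] (μ[ind s | m']) * (μ[ind t | m']) :=
            condExp_mul_of_stronglyMeasurable_left stronglyMeasurable_condExp
              (hint_tg.congr (Filter.Eventually.of_forall fun x => mul_comm _ _)) (ind_int htΩ)
          have h2 := hprod s t hs ht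
          rw [condexp_eval, condexp_eval, condexp_eval] at h2
          have : (fun x => ind t x * (μ[ind s | m']) x) = (μ[ind s | m']) * ind t := by
            funext x; simp [mul_comm]
          rw [this]
          exact pull.trans h2.symm
        calc ∫ x in B ∩ t, (μ[ind s | m']) x ∂μ
            = ∫ x in B, t.indicator (μ[ind s | m']) x ∂μ := (setIntegral_indicator htΩ).symm
          _ = ∫ x in B, (fun x => ind t x * (μ[ind s | m']) x) x ∂μ := by rw [e2]
          _ = ∫ x in B, (μ[fun x => ind t x * (μ[ind s | m']) x | m']) x ∂μ :=
              (setIntegral_condExp hm' hint_tg hB).symm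
          _ = ∫ x in B, (μ[ind (s ∩ t) | m']) x ∂μ := by
              refine setIntegral_congr_ae hBΩ (e4.mono fun x hx _ => hx)
          _ = ∫ x in B, ind (s ∩ t) x ∂μ :=
              setIntegral_condExp hm' (ind_int (hsΩ.inter htΩ)) hB
          _ = ∫ x in B ∩ (s ∩ t), (1:ℝ) ∂μ := setIntegral_indicator (hsΩ.inter htΩ)
          _ = ∫ x in (B ∩ t) ∩ s, (1:ℝ) ∂μ := by rw [show B ∩ (s ∩ t) = (B ∩ t) ∩ s by ext x; simp; tauto]
          _ = ∫ x in B ∩ t, ind s x ∂μ := (setIntegral_indicator hsΩ).symm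
      · -- compl
        intro A hAm hC
        have hAΩ : MeasurableSet[mΩ] A := hsub A hAm
        have h1 := integral_add_compl hAΩ (integrable_condExp (f := ind s) (m := m') (μ := μ))
        have h2 := integral_add_compl hAΩ (ind_int hsΩ (μ := μ))
        have h3 : ∫ x, (μ[ind s | m']) x ∂μ = ∫ x, ind s x ∂μ := integral_condExp hm'
        linarith
      · -- iUnion
        intro f hdisj hmeas hC
        rw [integral_iUnion (fun i => hsub _ (hmeas i)) hdisj integrable_condExp.integrableOn,
          integral_iUnion (fun i => hsub _ (hmeas i)) hdisj (ind_int hsΩ).integrableOn]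
        exact tsum_congr hC
    exact key.symm
  · intro h
    rw [condIndep_iff m' m₁ m₂ hm' hm₁ hm₂]
    intro s t hs ht
    have hsΩ : MeasurableSet[mΩ] s := hm₁ s hs
    have htΩ : MeasurableSet[mΩ] t := hm₂ t ht
    rw [condexp_eval, condexp_eval, condexp_eval]
    have h0 : ind (s ∩ t) = ind t * ind s := by
      rw [Set.inter_comm]; exact ind_inter t s
    have tower : (μ[ind (s ∩ t) | m']) =ᵐ[μ] μ[(μ[ind (s ∩ t) | m' ⊔ m₂]) | m'] :=
      (condExp_condExp_of_le le_sup_left hsub).symm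
    have pull1 : (μ[ind (s ∩ t) | m' ⊔ m₂]) =ᵐ[μ] ind t * (μ[ind s | m' ⊔ m₂]) := by
      rw [h0]
      exact condExp_mul_of_stronglyMeasurable_left ((ind_meas ht).mono le_sup_right)
        (by rw [← h0]; exact ind_int (hsΩ.inter htΩ)) (ind_int hsΩ)
    have step : ind t * (μ[ind s | m' ⊔ m₂]) =ᵐ[μ] ind t * (μ[ind s | m']) :=
      (h s hs).mono fun x hx => by simp [Pi.mul_apply, hx]
    have pull2 : (μ[ind t * (μ[ind s | m']) | m'])
        =ᵐ[μ] (μ[ind s | m']) * (μ[ind t | m']) := by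
      have hcomm : ind t * (μ[ind s | m']) = (μ[ind s | m']) * ind t := mul_comm _ _
      have hint2 : Integrable ((μ[ind s | m']) * ind t) μ := by
        have := integrable_condExp.bdd_mul (μ := μ) (g := μ[ind s | m'])
          (ind_meas htΩ).aestronglyMeasurable (Filter.Eventually.of_forall (ind_bdd t))
        refine this.congr (Filter.Eventually.of_forall fun x => ?_)
        simp [mul_comm]
      rw [hcomm]
      exact condExp_mul_of_stronglyMeasurable_left stronglyMeasurable_condExp hint2 (ind_int htΩ)
    calc (μ[ind (s ∩ t) | m']) =ᵐ[μ] μ[(μ[ind (s ∩ t) | m' ⊔ m₂]) | m'] := tower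
      _ =ᵐ[μ] μ[ind t * (μ[ind s | m']) | m'] := condExp_congr_ae (pull1.trans step)
      _ =ᵐ[μ] (μ[ind s | m']) * (μ[ind t | m']) := pull2

lemma ci_congr {n' : MeasurableSpace Ω} (h : m' = n') {hm' : m' ≤ mΩ} {hn' : n' ≤ mΩ} :
    CondIndep m' m₁ m₂ hm' μ ↔ CondIndep n' m₁ m₂ hn' μ := by subst h; rfl

theorem ci_of_le (hm' : m' ≤ mΩ) (hm₁ : m₁ ≤ m') (hm₂ : m₂ ≤ mΩ) :
    CondIndep m' m₁ m₂ hm' μ := by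
  rw [doob hm' (hm₁.trans hm') hm₂]
  intro s hs
  have h1 : StronglyMeasurable[m'] (ind s) := ind_meas (hm₁ s hs)
  have hi : Integrable (ind s) μ := ind_int ((hm₁.trans hm') s hs)
  rw [condExp_of_stronglyMeasurable (sup_le hm' hm₂) (h1.mono le_sup_left) hi,
    condExp_of_stronglyMeasurable hm' h1 hi]

theorem ci_weak_union (hm' : m' ≤ mΩ) (hm₁ : m₁ ≤ mΩ) (hm₂ : m₂ ≤ mΩ) (hm₃ : m₃ ≤ mΩ)
    (h : CondIndep m' m₁ (m₂ ⊔ m₃) hm' μ) :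
    CondIndep (m' ⊔ m₃) m₁ m₂ (sup_le hm' hm₃) μ := by
  rw [doob hm' hm₁ (sup_le hm₂ hm₃)] at h
  rw [doob (sup_le hm' hm₃) hm₁ hm₂]
  intro s hs
  have e : (m' ⊔ m₃) ⊔ m₂ = m' ⊔ (m₂ ⊔ m₃) := by
    rw [sup_assoc, sup_comm m₃ m₂]
  have h1 := h s hs
  have tower : (μ[ind s | m' ⊔ m₃]) =ᵐ[μ] μ[ind s | m'] := by
    have t1 : (μ[(μ[ind s | m' ⊔ (m₂ ⊔ m₃)]) | m' ⊔ m₃]) =ᵐ[μ] μ[ind s | m' ⊔ m₃] :=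
      condExp_condExp_of_le (sup_le le_sup_left (le_sup_right.trans le_sup_right))
        (sup_le hm' (sup_le hm₂ hm₃))
    have t2 : (μ[(μ[ind s | m' ⊔ (m₂ ⊔ m₃)]) | m' ⊔ m₃]) =ᵐ[μ] μ[(μ[ind s | m']) | m' ⊔ m₃] :=
      condExp_congr_ae h1
    have t3 : (μ[(μ[ind s | m']) | m' ⊔ m₃]) = μ[ind s | m'] :=
      condExp_of_stronglyMeasurable (sup_le hm' hm₃)
        (stronglyMeasurable_condExp.mono le_sup_left) integrable_condExp
    exact t1.symm.trans (t2.trans (by rw [t3]))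
  calc (μ[ind s | (m' ⊔ m₃) ⊔ m₂]) = μ[ind s | m' ⊔ (m₂ ⊔ m₃)] := by rw [e]
    _ =ᵐ[μ] μ[ind s | m'] := h1
    _ =ᵐ[μ] μ[ind s | m' ⊔ m₃] := tower.symm

theorem ci_contraction (hm' : m' ≤ mΩ) (hm₁ : m₁ ≤ mΩ) (hm₂ : m₂ ≤ mΩ) (hm₃ : m₃ ≤ mΩ)
    (h1 : CondIndep (m' ⊔ m₃) m₁ m₂ (sup_le hm' hm₃) μ)
    (h2 : CondIndep m' m₁ m₃ hm' μ) :
    CondIndep m' m₁ (m₂ ⊔ m₃) hm' μ := by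
  rw [doob (sup_le hm' hm₃) hm₁ hm₂] at h1
  rw [doob hm' hm₁ hm₃] at h2
  rw [doob hm' hm₁ (sup_le hm₂ hm₃)]
  intro s hs
  have e : m' ⊔ (m₂ ⊔ m₃) = (m' ⊔ m₃) ⊔ m₂ := by
    rw [sup_assoc, sup_comm m₃ m₂]
  calc (μ[ind s | m' ⊔ (m₂ ⊔ m₃)]) = μ[ind s | (m' ⊔ m₃) ⊔ m₂] := by rw [e]
    _ =ᵐ[μ] μ[ind s | m' ⊔ m₃] := h1 s hs
    _ =ᵐ[μ] μ[ind s | m'] := h2 s hs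

theorem ci_add_right_of_le (hm' : m' ≤ mΩ) (hm₁ : m₁ ≤ mΩ) (hm₂ : m₂ ≤ mΩ) (h3 : m₃ ≤ m')
    (h : CondIndep m' m₁ m₂ hm' μ) :
    CondIndep m' m₁ (m₂ ⊔ m₃) hm' μ := by
  rw [doob hm' hm₁ hm₂] at h
  rw [doob hm' hm₁ (sup_le hm₂ (h3.trans hm'))]
  intro s hs
  have e : m' ⊔ (m₂ ⊔ m₃) = m' ⊔ m₂ := by
    rw [sup_comm m₂ m₃, ← sup_assoc, sup_eq_left.mpr h3]
  rw [e]
  exact h s hs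

end CMAux2

namespace CMSeq
set_option linter.unusedSectionVars false
open CMAux CMAux2 MeasureTheory ProbabilityTheory

variable {Ω : Type*} {mΩ : MeasurableSpace Ω} [StandardBorelSpace Ω]
  {μ : Measure Ω} [IsProbabilityMeasure μ] {N d : ℕ}

variable (X : Fin (N + 1) → Ω → (Fin d → ℝ))

/-- σ-algebra generated by `X i`. -/
def sa (i : Fin (N + 1)) : MeasurableSpace Ω := MeasurableSpace.comap (X i) inferInstance

/-- σ-algebra generated by the family `(X i)_{i ∈ S}`. -/
def J (S : Set (Fin (N + 1))) : MeasurableSpace Ω := ⨆ i ∈ S, sa X i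

variable {X}
variable (hX : ∀ k, Measurable (X k))

include hX in
lemma sa_le (i : Fin (N + 1)) : sa X i ≤ mΩ := (hX i).comap_le

include hX in
lemma J_le (S : Set (Fin (N + 1))) : J X S ≤ mΩ := iSup₂_le fun i _ => sa_le hX i

lemma J_union (A B : Set (Fin (N + 1))) : J X (A ∪ B) = J X A ⊔ J X B := iSup_union

lemma J_singleton (i : Fin (N + 1)) : J X {i} = sa X i := iSup_singleton

lemma J_pair (i j : Fin (N + 1)) : J X {i, j} = sa X i ⊔ sa X j := by
  rw [show ({i, j} : Set (Fin (N+1))) = {i} ∪ {j} by rfl, J_union, J_singleton, J_singleton]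

lemma J_empty : J X (∅ : Set (Fin (N + 1))) = ⊥ := iSup_emptyset

lemma J_mono {A B : Set (Fin (N + 1))} (h : A ⊆ B) : J X A ≤ J X B := biSup_mono h

lemma sa_le_J {i : Fin (N + 1)} {S : Set (Fin (N + 1))} (hi : i ∈ S) : sa X i ≤ J X S := by
  rw [← J_singleton (X := X) i]
  exact J_mono (Set.singleton_subset_iff.mpr hi)

lemma comap_pair (j c : Fin (N + 1)) :
    MeasurableSpace.comap (fun ω => (X j ω, X c ω)) inferInstance = sa X j ⊔ sa X c := by
  rw [show (inferInstance : MeasurableSpace ((Fin d → ℝ) × (Fin d → ℝ)))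
      = MeasurableSpace.comap Prod.fst inferInstance ⊔ MeasurableSpace.comap Prod.snd inferInstance
      from rfl,
    MeasurableSpace.comap_sup, MeasurableSpace.comap_comp, MeasurableSpace.comap_comp]
  rfl

lemma comap_family (P : Fin (N + 1) → Prop) :
    MeasurableSpace.comap (fun ω (i : {i : Fin (N + 1) // P i}) => X i.1 ω) inferInstance
      = J X {i | P i} := by
  rw [show (inferInstance : MeasurableSpace ({i : Fin (N + 1) // P i} → Fin d → ℝ))
      = MeasurableSpace.pi from rfl,
    MeasurableSpace.pi, MeasurableSpace.comap_iSup]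
  simp_rw [MeasurableSpace.comap_comp]
  rw [iSup_subtype]
  rfl

lemma comap_single (k : Fin (N + 1)) :
    MeasurableSpace.comap (X k) inferInstance = sa X k := rfl

/-- Generic conversion from `CondIndepFun` to `CondIndep` in normal form. -/
lemma condIndepFun_iff_ci {β γ : Type*} [mβ : MeasurableSpace β] [mγ : MeasurableSpace γ]
    {m' n' m₁ m₂ : MeasurableSpace Ω} {hm' : m' ≤ mΩ} {hn' : n' ≤ mΩ} {f : Ω → β} {g : Ω → γ}
    (h' : m' = n') (h₁ : mβ.comap f = m₁) (h₂ : mγ.comap g = m₂) :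
    CondIndepFun m' hm' f g μ ↔ CondIndep n' m₁ m₂ hn' μ := by
  subst h'; subst h₁; subst h₂
  exact condIndepFun_iff_condIndep m' hm' f g μ

omit [StandardBorelSpace Ω] [IsProbabilityMeasure μ] in
lemma fin_set_eq {p q : Fin (N + 1) → Prop} (h : ∀ i : Fin (N + 1), p i ↔ q i) :
    {i : Fin (N + 1) | p i} = {i : Fin (N + 1) | q i} := Set.ext h

include hX

/-- The chain induction: from a one-step conditional Markov property (relative to the
conditioning family `C`), the whole future is conditionally independent of the "past" `P`. -/
theorem chain [IsProbabilityMeasure μ] (C P : Set (Fin (N + 1))) (j : Fin (N + 1)) (M : ℕ)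
    (hcm : ∀ mf k : Fin (N + 1), j ≤ mf → mf < k → k.1 ≤ M →
      CondIndep (sa X mf ⊔ J X C) (sa X k) (J X (P ∪ {i | j ≤ i ∧ i < mf}))
        (sup_le (sa_le hX mf) (J_le hX C)) μ) :
    ∀ m : ℕ, m ≤ M →
      CondIndep (sa X j ⊔ J X C) (J X {i | j < i ∧ i.1 ≤ m}) (J X P)
        (sup_le (sa_le hX j) (J_le hX C)) μ := by
  intro m
  induction m with
  | zero =>
    intro _
    have e : {i : Fin (N + 1) | j < i ∧ i.1 ≤ 0} = (∅ : Set (Fin (N + 1))) := by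
      ext i
      simp only [Set.mem_setOf_eq, Set.mem_empty_iff_false, iff_false, not_and, Fin.lt_def]
      omega
    rw [e, J_empty]
    exact condIndep_bot_left _
  | succ m ih =>
    intro hm1
    have IH := ih (by omega)
    by_cases hc : m + 1 ≤ N ∧ j.1 ≤ m
    · obtain ⟨h1, h2⟩ := hc
      have hkN : m + 1 < N + 1 := by omega
      have hmN : m < N + 1 := by omega
      have hstep := hcm ⟨m, hmN⟩ ⟨m + 1, hkN⟩ (by rw [Fin.le_def]; exact h2)
        (by rw [Fin.lt_def]; exact Nat.lt_succ_self m) hm1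
      rw [J_union] at hstep
      -- weak union
      have hwu := ci_weak_union (sup_le (sa_le hX _) (J_le hX C)) (sa_le hX _)
        (J_le hX P) (J_le hX _) hstep
      -- move conditioning σ-algebra to normal form
      have e1 : (sa X ⟨m, hmN⟩ ⊔ J X C) ⊔ J X {i | j ≤ i ∧ i < ⟨m, hmN⟩}
          = (sa X j ⊔ J X C) ⊔ J X {i | j < i ∧ i.1 ≤ m} := by
        rw [← J_singleton (X := X) ⟨m, hmN⟩, ← J_singleton (X := X) j,
          ← J_union, ← J_union, ← J_union, ← J_union]
        congr 1
        ext i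
        by_cases hiC : i ∈ C <;>
          simp only [Set.mem_union, Set.mem_setOf_eq, Set.mem_singleton_iff, hiC,
            or_true, false_or, or_false, true_or, iff_true, Fin.lt_def, Fin.le_def,
            Fin.ext_iff] <;> omega
      rw [ci_congr e1 (hn' := sup_le (sup_le (sa_le hX j) (J_le hX C)) (J_le hX _))] at hwu
      -- contraction
      have hcon := ci_contraction (sup_le (sa_le hX j) (J_le hX C)) (J_le hX P)
        (sa_le hX _) (J_le hX _) hwu.symm IH.symm
      have e2 : sa X ⟨m + 1, hkN⟩ ⊔ J X {i | j < i ∧ i.1 ≤ m}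
          = J X {i | j < i ∧ i.1 ≤ m + 1} := by
        rw [← J_singleton (X := X) ⟨m + 1, hkN⟩, ← J_union]
        congr 1
        ext i
        simp only [Set.mem_union, Set.mem_setOf_eq, Set.mem_singleton_iff, Fin.lt_def,
          Fin.ext_iff]
        omega
      rw [e2] at hcon
      exact hcon.symm
    · have e : {i : Fin (N + 1) | j < i ∧ i.1 ≤ m + 1} = {i : Fin (N + 1) | j < i ∧ i.1 ≤ m} := by
        ext i
        have := i.isLt
        simp only [Set.mem_setOf_eq, Fin.lt_def]
        omega
      rw [e]
      exact IH

end CMSeq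



namespace CMSeq
set_option linter.unusedSectionVars false
open CMAux CMAux2 MeasureTheory ProbabilityTheory

variable {Ω : Type*} {mΩ : MeasurableSpace Ω} [StandardBorelSpace Ω]
  {μ : Measure Ω} [IsProbabilityMeasure μ] {N d : ℕ}
  {X : Fin (N + 1) → Ω → (Fin d → ℝ)} (hX : ∀ k, Measurable (X k))

include hX

lemma recip_iff :
    CMPaper.IsReciprocalSeq μ X hX ↔ ∀ k1 k2 : Fin (N + 1), k1 < k2 →
      CondIndep (sa X k1 ⊔ sa X k2) (J X {i | k1 < i ∧ i < k2}) (J X {i | i < k1 ∨ k2 < i})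
        (sup_le (sa_le hX k1) (sa_le hX k2)) μ := by
  unfold CMPaper.IsReciprocalSeq
  refine forall_congr' fun k1 => forall_congr' fun k2 => imp_congr_right fun h => ?_
  exact condIndepFun_iff_ci (comap_pair k1 k2) (comap_family _) (comap_family _)

lemma cmc_iff (k1 k2 c : Fin (N + 1)) :
    CMPaper.IsCMcOn μ X hX k1 k2 c ↔ ∀ j k : Fin (N + 1), k1 ≤ j → j < k → k ≤ k2 →
      CondIndep (sa X j ⊔ sa X c) (sa X k) (J X {i | k1 ≤ i ∧ i < j})
        (sup_le (sa_le hX j) (sa_le hX c)) μ := by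
  unfold CMPaper.IsCMcOn
  refine forall_congr' fun j => forall_congr' fun k => imp_congr_right fun _ =>
    imp_congr_right fun _ => imp_congr_right fun _ => ?_
  exact condIndepFun_iff_ci (comap_pair j c) (comap_single k) (comap_family _)

include hX in
lemma cmF_of_recip (hR : CMPaper.IsReciprocalSeq μ X hX) (k1 : Fin (N + 1)) :
    CMPaper.IsCMcOn μ X hX k1 (Fin.last N) k1 := by
  rw [cmc_iff hX]
  rw [recip_iff hX] at hR
  intro j k hk1j hjk _
  rcases eq_or_lt_of_le hk1j with rfl | hlt
  · have e : {i : Fin (N + 1) | k1 ≤ i ∧ i < k1} = (∅ : Set (Fin (N + 1))) := by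
      ext i
      simp only [Set.mem_setOf_eq, Set.mem_empty_iff_false, iff_false, not_and,
        Fin.lt_def, Fin.le_def]
      omega
    rw [e, J_empty]
    exact condIndep_bot_right _
  · have h := (hR k1 j hlt).symm
    have h2 := condIndep_of_condIndep_of_le_left h
      (sa_le_J (Or.inr hjk))
    rw [ci_congr (sup_comm (sa X k1) (sa X j))
      (hn' := sup_le (sa_le hX j) (sa_le hX k1))] at h2
    have h3 := ci_add_right_of_le (sup_le (sa_le hX j) (sa_le hX k1)) (sa_le hX k)
      (J_le hX _) (le_sup_right : sa X k1 ≤ _) h2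
    have hv : k1.1 < j.1 := hlt
    have e : J X {i : Fin (N + 1) | k1 < i ∧ i < j} ⊔ sa X k1
        = J X {i : Fin (N + 1) | k1 ≤ i ∧ i < j} := by
      rw [← J_singleton (X := X) k1, ← J_union]
      congr 1
      ext i
      simp only [Set.mem_union, Set.mem_setOf_eq, Set.mem_singleton_iff, Fin.lt_def,
        Fin.le_def, Fin.ext_iff]
      omega
    rw [e] at h3
    exact h3

include hX in
lemma cmL_of_recip (hR : CMPaper.IsReciprocalSeq μ X hX) :
    CMPaper.IsCMcOn μ X hX 0 (Fin.last N) (Fin.last N) := by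
  rw [cmc_iff hX]
  rw [recip_iff hX] at hR
  intro j k _ hjk hklast
  rcases eq_or_lt_of_le hklast with rfl | hk
  · exact ci_of_le _ le_sup_right (J_le hX _)
  · have h := hR j (Fin.last N) (hjk.trans hk)
    have h2 := condIndep_of_condIndep_of_le_left h
      (sa_le_J ⟨hjk, hk⟩)
    exact condIndep_of_condIndep_of_le_right h2
      (J_mono (fun i hi => Or.inl hi.2))

include hX in
lemma cmL2_of_recip (hR : CMPaper.IsReciprocalSeq μ X hX) (k2 : Fin (N + 1)) :
    CMPaper.IsCMcOn μ X hX 0 k2 k2 := by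
  rw [cmc_iff hX]
  rw [recip_iff hX] at hR
  intro j k _ hjk hkk2
  rcases eq_or_lt_of_le hkk2 with rfl | hk
  · exact ci_of_le _ le_sup_right (J_le hX _)
  · have h := hR j k2 (hjk.trans hk)
    have h2 := condIndep_of_condIndep_of_le_left h
      (sa_le_J ⟨hjk, hk⟩)
    exact condIndep_of_condIndep_of_le_right h2
      (J_mono (fun i hi => Or.inl hi.2))

include hX in
lemma recip_of_cmFL (hF : ∀ k1, CMPaper.IsCMcOn μ X hX k1 (Fin.last N) k1)
    (hL : CMPaper.IsCMcOn μ X hX 0 (Fin.last N) (Fin.last N)) :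
    CMPaper.IsReciprocalSeq μ X hX := by
  rw [recip_iff hX]
  intro k1 k2 h12
  have hv : k1.1 < k2.1 := h12
  -- chain A: the future beyond `k2` vs `[k1, k2)`, conditioned on `(k2, k1)`
  have chA : CondIndep (sa X k2 ⊔ J X {k1}) (J X {i | k2 < i ∧ i.1 ≤ N})
      (J X {i | k1 ≤ i ∧ i < k2}) (sup_le (sa_le hX k2) (J_le hX _)) μ := by
    refine chain hX {k1} {i | k1 ≤ i ∧ i < k2} k2 N ?_ N le_rfl
    intro mf k hk2mf hmfk _
    have hvm : k2.1 ≤ mf.1 := hk2mf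
    have h := (cmc_iff hX k1 (Fin.last N) k1).mp (hF k1) mf k
      (le_of_lt (lt_of_lt_of_le h12 hk2mf)) hmfk (Fin.le_last k)
    rw [ci_congr (show sa X mf ⊔ J X {k1} = sa X mf ⊔ sa X k1 by rw [J_singleton])
        (hn' := sup_le (sa_le hX mf) (sa_le hX k1)),
      show ({i | k1 ≤ i ∧ i < k2} ∪ {i : Fin (N+1) | k2 ≤ i ∧ i < mf})
          = {i : Fin (N+1) | k1 ≤ i ∧ i < mf} by
        ext i
        simp only [Set.mem_union, Set.mem_setOf_eq, Fin.lt_def, Fin.le_def]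
        omega]
    exact h
  rw [ci_congr (show sa X k2 ⊔ J X {k1} = sa X k1 ⊔ sa X k2 by
        rw [J_singleton, sup_comm])
      (hn' := sup_le (sa_le hX k1) (sa_le hX k2)),
    show {i : Fin (N+1) | k2 < i ∧ i.1 ≤ N} = {i : Fin (N+1) | k2 < i} by
      ext i; have := i.isLt; simp only [Set.mem_setOf_eq, Fin.lt_def]; omega] at chA
  have P1 : CondIndep (sa X k1 ⊔ sa X k2) (J X {i | k1 < i ∧ i < k2})
      (J X {i | k2 < i}) (sup_le (sa_le hX k1) (sa_le hX k2)) μ :=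
    (condIndep_of_condIndep_of_le_right chA
      (J_mono (fun i hi => ⟨le_of_lt hi.1, hi.2⟩))).symm
  -- chain B: the future beyond `k1` vs `{i < k1}`, conditioned on `(k1, N)`
  have chB : CondIndep (sa X k1 ⊔ J X {Fin.last N}) (J X {i | k1 < i ∧ i.1 ≤ N})
      (J X {i | i < k1}) (sup_le (sa_le hX k1) (J_le hX _)) μ := by
    refine chain hX {Fin.last N} {i | i < k1} k1 N ?_ N le_rfl
    intro mf k hk1mf hmfk _
    have hvm : k1.1 ≤ mf.1 := hk1mf
    have h := (cmc_iff hX 0 (Fin.last N) (Fin.last N)).mp hL mf k (Fin.zero_le mf)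
      hmfk (Fin.le_last k)
    rw [ci_congr (show sa X mf ⊔ J X {Fin.last N} = sa X mf ⊔ sa X (Fin.last N) by
          rw [J_singleton])
        (hn' := sup_le (sa_le hX mf) (sa_le hX (Fin.last N))),
      show ({i | i < k1} ∪ {i : Fin (N+1) | k1 ≤ i ∧ i < mf})
          = {i : Fin (N+1) | 0 ≤ i ∧ i < mf} by
        ext i
        simp only [Set.mem_union, Set.mem_setOf_eq, Fin.lt_def, Fin.le_def, Fin.val_zero]
        omega]
    exact h
  rw [show {i : Fin (N+1) | k1 < i ∧ i.1 ≤ N}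
      = ({i : Fin (N+1) | k1 < i ∧ i < k2} ∪ {i : Fin (N+1) | k2 ≤ i}) by
        ext i; have := i.isLt
        simp only [Set.mem_union, Set.mem_setOf_eq, Fin.lt_def, Fin.le_def]; omega,
    J_union] at chB
  have hwu := ci_weak_union (sup_le (sa_le hX k1) (J_le hX _)) (J_le hX _) (J_le hX _)
    (J_le hX _) chB.symm
  rw [ci_congr (show (sa X k1 ⊔ J X {Fin.last N}) ⊔ J X {i : Fin (N+1) | k2 ≤ i}
      = (sa X k1 ⊔ sa X k2) ⊔ J X {i : Fin (N+1) | k2 < i} by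
        rw [← J_singleton (X := X) k1, ← J_singleton (X := X) k2, ← J_union, ← J_union,
          ← J_union, ← J_union]
        congr 1
        ext i
        have := i.isLt
        simp only [Set.mem_union, Set.mem_setOf_eq, Set.mem_singleton_iff, Fin.lt_def,
          Fin.le_def, Fin.ext_iff, Fin.val_last]
        omega)
    (hn' := sup_le (sup_le (sa_le hX k1) (sa_le hX k2)) (J_le hX _))] at hwu
  have hcon := ci_contraction (sup_le (sa_le hX k1) (sa_le hX k2)) (J_le hX _)
    (J_le hX _) (J_le hX _) hwu.symm P1
  rw [← J_union, show ({i : Fin (N+1) | i < k1} ∪ {i : Fin (N+1) | k2 < i})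
      = {i : Fin (N+1) | i < k1 ∨ k2 < i} by
    ext i; simp only [Set.mem_union, Set.mem_setOf_eq]] at hcon
  exact hcon

include hX in
lemma recip_of_cmLF (hL2 : ∀ k2, CMPaper.IsCMcOn μ X hX 0 k2 k2)
    (hF0 : CMPaper.IsCMcOn μ X hX 0 (Fin.last N) 0) :
    CMPaper.IsReciprocalSeq μ X hX := by
  rw [recip_iff hX]
  intro k1 k2 h12
  have hv : k1.1 < k2.1 := h12
  -- chain A': `(k1, k2]` vs `{i < k1}`, conditioned on `(k1, k2)`
  have chA : CondIndep (sa X k1 ⊔ J X {k2}) (J X {i | k1 < i ∧ i.1 ≤ k2.1})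
      (J X {i | i < k1}) (sup_le (sa_le hX k1) (J_le hX _)) μ := by
    refine chain hX {k2} {i | i < k1} k1 k2.1 ?_ k2.1 le_rfl
    intro mf k hk1mf hmfk hkk2
    have hvm : k1.1 ≤ mf.1 := hk1mf
    have h := (cmc_iff hX 0 k2 k2).mp (hL2 k2) mf k (Fin.zero_le mf) hmfk
      (by rw [Fin.le_def]; exact hkk2)
    rw [ci_congr (show sa X mf ⊔ J X {k2} = sa X mf ⊔ sa X k2 by rw [J_singleton])
        (hn' := sup_le (sa_le hX mf) (sa_le hX k2)),
      show ({i | i < k1} ∪ {i : Fin (N+1) | k1 ≤ i ∧ i < mf})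
          = {i : Fin (N+1) | 0 ≤ i ∧ i < mf} by
        ext i
        simp only [Set.mem_union, Set.mem_setOf_eq, Fin.lt_def, Fin.le_def, Fin.val_zero]
        omega]
    exact h
  rw [ci_congr (show sa X k1 ⊔ J X {k2} = sa X k1 ⊔ sa X k2 by rw [J_singleton])
    (hn' := sup_le (sa_le hX k1) (sa_le hX k2))] at chA
  have P1 : CondIndep (sa X k1 ⊔ sa X k2) (J X {i | k1 < i ∧ i < k2})
      (J X {i | i < k1}) (sup_le (sa_le hX k1) (sa_le hX k2)) μ :=
    condIndep_of_condIndep_of_le_left chA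
      (J_mono (fun i hi => ⟨hi.1, Nat.le_of_lt hi.2⟩))
  -- chain B': the future beyond `k2` vs `{i < k2}`, conditioned on `(k2, 0)`
  have chB : CondIndep (sa X k2 ⊔ J X {(0 : Fin (N+1))}) (J X {i | k2 < i ∧ i.1 ≤ N})
      (J X {i | i < k2}) (sup_le (sa_le hX k2) (J_le hX _)) μ := by
    refine chain hX {0} {i | i < k2} k2 N ?_ N le_rfl
    intro mf k hk2mf hmfk _
    have hvm : k2.1 ≤ mf.1 := hk2mf
    have h := (cmc_iff hX 0 (Fin.last N) 0).mp hF0 mf k (Fin.zero_le mf) hmfk (Fin.le_last k)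
    rw [ci_congr (show sa X mf ⊔ J X {(0 : Fin (N+1))} = sa X mf ⊔ sa X 0 by
          rw [J_singleton])
        (hn' := sup_le (sa_le hX mf) (sa_le hX 0)),
      show ({i | i < k2} ∪ {i : Fin (N+1) | k2 ≤ i ∧ i < mf})
          = {i : Fin (N+1) | 0 ≤ i ∧ i < mf} by
        ext i
        simp only [Set.mem_union, Set.mem_setOf_eq, Fin.lt_def, Fin.le_def, Fin.val_zero]
        omega]
    exact h
  rw [show {i : Fin (N+1) | k2 < i ∧ i.1 ≤ N} = {i : Fin (N+1) | k2 < i} by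
      ext i; have := i.isLt; simp only [Set.mem_setOf_eq, Fin.lt_def]; omega,
    show {i : Fin (N+1) | i < k2}
        = ({i : Fin (N+1) | k1 < i ∧ i < k2} ∪ {i : Fin (N+1) | i ≤ k1}) by
      ext i; simp only [Set.mem_union, Set.mem_setOf_eq, Fin.lt_def, Fin.le_def]; omega,
    J_union] at chB
  have hwu := ci_weak_union (sup_le (sa_le hX k2) (J_le hX _)) (J_le hX _) (J_le hX _)
    (J_le hX _) chB
  rw [ci_congr (show (sa X k2 ⊔ J X {(0 : Fin (N+1))}) ⊔ J X {i : Fin (N+1) | i ≤ k1}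
      = (sa X k1 ⊔ sa X k2) ⊔ J X {i : Fin (N+1) | i < k1} by
        rw [← J_singleton (X := X) k2, ← J_singleton (X := X) k1, ← J_union, ← J_union,
          ← J_union, ← J_union]
        congr 1
        ext i
        simp only [Set.mem_union, Set.mem_setOf_eq, Set.mem_singleton_iff, Fin.lt_def,
          Fin.le_def, Fin.ext_iff, Fin.val_zero]
        omega)
    (hn' := sup_le (sup_le (sa_le hX k1) (sa_le hX k2)) (J_le hX _))] at hwu
  have hcon := ci_contraction (sup_le (sa_le hX k1) (sa_le hX k2)) (J_le hX _)
    (J_le hX _) (J_le hX _) hwu.symm P1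
  rw [← J_union, show ({i : Fin (N+1) | k2 < i} ∪ {i : Fin (N+1) | i < k1})
      = {i : Fin (N+1) | i < k1 ∨ k2 < i} by
    ext i; simp only [Set.mem_union, Set.mem_setOf_eq]; tauto] at hcon
  exact hcon

end CMSeq

/-- A (general) stochastic sequence is reciprocal iff it is `[k1,N]`-CM_F for
every `k1` and CM_L; equivalently, iff it is `[0,k2]`-CM_L for every `k2` and CM_F. -/
theorem stmt_6 {Ω : Type*} [MeasurableSpace Ω] [StandardBorelSpace Ω] [Nonempty Ω]
    (μ : Measure Ω) [IsProbabilityMeasure μ] {N d : ℕ}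
    (X : Fin (N + 1) → Ω → (Fin d → ℝ)) (hX : ∀ k, Measurable (X k)) :
    (CMPaper.IsReciprocalSeq μ X hX ↔
      ((∀ k1 : Fin (N + 1), CMPaper.IsCMcOn μ X hX k1 (Fin.last N) k1) ∧
        CMPaper.IsCMcOn μ X hX 0 (Fin.last N) (Fin.last N))) ∧
    (CMPaper.IsReciprocalSeq μ X hX ↔
      ((∀ k2 : Fin (N + 1), CMPaper.IsCMcOn μ X hX 0 k2 k2) ∧
        CMPaper.IsCMcOn μ X hX 0 (Fin.last N) 0)) := by
  refine ⟨⟨fun hR => ⟨fun k1 => CMSeq.cmF_of_recip hX hR k1, CMSeq.cmL_of_recip hX hR⟩,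
    fun h => CMSeq.recip_of_cmFL hX h.1 h.2⟩,
    ⟨fun hR => ⟨fun k2 => CMSeq.cmL2_of_recip hX hR k2, CMSeq.cmF_of_recip hX hR 0⟩,
    fun h => CMSeq.recip_of_cmLF hX h.1 h.2⟩⟩
end

section
/- If a stochastic sequence [x_0,...,x_N] is [k1,N]-CM_F for every k1 ∈ [0,N] and is CM_L, then it is [k1,N]-CM_F and [0,k2]-CM_L for every k1, k2 ∈ [0,N]. -/
open MeasureTheory ProbabilityTheory Matrix

namespace CMAux

set_option linter.unusedSectionVars false

variable {Ω : Type*} {m' : MeasurableSpace Ω} {mΩ : MeasurableSpace Ω} [StandardBorelSpace Ω]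
  {μ : Measure Ω} [IsFiniteMeasure μ]

lemma comap_pair_eq {β γ : Type*} [mβ : MeasurableSpace β] [mγ : MeasurableSpace γ]
    (f : Ω → β) (g : Ω → γ) :
    MeasurableSpace.comap (fun ω => (f ω, g ω)) inferInstance =
      mβ.comap f ⊔ mγ.comap g := by
  show MeasurableSpace.comap _ (mβ.comap Prod.fst ⊔ mγ.comap Prod.snd) = _
  rw [MeasurableSpace.comap_sup, MeasurableSpace.comap_comp, MeasurableSpace.comap_comp]
  rfl

lemma sup_eq_generateFrom_inter (m₁ m₂ : MeasurableSpace Ω) :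
    m₁ ⊔ m₂ = MeasurableSpace.generateFrom
      {s | ∃ s₁ s₂, MeasurableSet[m₁] s₁ ∧ MeasurableSet[m₂] s₂ ∧ s = s₁ ∩ s₂} := by
  refine le_antisymm (sup_le ?_ ?_) (MeasurableSpace.generateFrom_le ?_)
  · intro s hs
    exact MeasurableSpace.measurableSet_generateFrom
      ⟨s, Set.univ, hs, MeasurableSet.univ, (Set.inter_univ s).symm⟩
  · intro s hs
    exact MeasurableSpace.measurableSet_generateFrom
      ⟨Set.univ, s, MeasurableSet.univ, hs, (Set.univ_inter s).symm⟩
  · rintro s ⟨s₁, s₂, h₁, h₂, rfl⟩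
    exact ((le_sup_left : m₁ ≤ m₁ ⊔ m₂) _ h₁).inter ((le_sup_right : m₂ ≤ m₁ ⊔ m₂) _ h₂)

lemma isPiSystem_inter_sets (m₁ m₂ : MeasurableSpace Ω) :
    IsPiSystem {s | ∃ s₁ s₂, MeasurableSet[m₁] s₁ ∧ MeasurableSet[m₂] s₂ ∧ s = s₁ ∩ s₂} := by
  rintro s ⟨s₁, s₂, h₁, h₂, rfl⟩ t ⟨t₁, t₂, g₁, g₂, rfl⟩ -
  refine ⟨s₁ ∩ t₁, s₂ ∩ t₂, h₁.inter g₁, h₂.inter g₂, ?_⟩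
  ext x; simp only [Set.mem_inter_iff]; tauto

lemma inter_indicator_one' {A B : Set Ω} :
    (A ∩ B).indicator (fun _ => (1 : ℝ)) =
      A.indicator (fun _ => (1 : ℝ)) * B.indicator (fun _ => (1 : ℝ)) := by
  funext x
  by_cases hxA : x ∈ A <;> by_cases hxB : x ∈ B <;>
    simp [Set.indicator_apply, hxA, hxB]

lemma indicator_mul_indicator_one {A : Set Ω} (h : Ω → ℝ) :
    A.indicator h = h * A.indicator (fun _ => (1 : ℝ)) := by
  funext x
  by_cases hx : x ∈ A <;>
    simp [Set.indicator_of_mem, Set.indicator_of_notMem, hx]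

/-- Key characterization: conditional independence as "dropping" `g` from the conditioning
σ-algebra in conditional probabilities of events generated by `f`. -/
theorem condIndepFun_iff_condexp_drop {β γ : Type*} [mβ : MeasurableSpace β]
    [mγ : MeasurableSpace γ] (hm' : m' ≤ mΩ)
    {f : Ω → β} {g : Ω → γ} (hf : Measurable f) (hg : Measurable g) :
    CondIndepFun m' hm' f g μ ↔
      ∀ s, MeasurableSet s →
        (μ⟦f ⁻¹' s | m' ⊔ mγ.comap g⟧) =ᵐ[μ] (μ⟦f ⁻¹' s | m'⟧) := by
  have hm'' : m' ⊔ mγ.comap g ≤ mΩ := sup_le hm' hg.comap_le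
  rw [condIndepFun_iff_condExp_inter_preimage_eq_mul hf hg]
  constructor
  · intro h s hs
    set A := f ⁻¹' s with hA_def
    have hA : MeasurableSet A := hf hs
    have hint : Integrable (A.indicator (fun _ => (1 : ℝ))) μ :=
      (integrable_const (1 : ℝ)).indicator hA
    refine (ae_eq_condExp_of_forall_setIntegral_eq hm'' hint
      (fun E _ _ => integrable_condExp.integrableOn) ?_
      (StronglyMeasurable.aestronglyMeasurable (stronglyMeasurable_condExp.mono le_sup_left))).symm
    intro E hE _
    have hgen : (m' ⊔ mγ.comap g) = MeasurableSpace.generateFrom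
        {u | ∃ s₁ s₂, MeasurableSet[m'] s₁ ∧ MeasurableSet[mγ.comap g] s₂ ∧ u = s₁ ∩ s₂} :=
      sup_eq_generateFrom_inter m' (mγ.comap g)
    refine MeasurableSpace.induction_on_inter (m := m' ⊔ mγ.comap g)
      (C := fun E _ => ∫ x in E, (μ⟦A | m'⟧) x ∂μ = ∫ x in E, A.indicator (fun _ => (1 : ℝ)) x ∂μ)
      hgen (isPiSystem_inter_sets m' (mγ.comap g)) (by simp) ?_ ?_ ?_ _ hE
    · rintro E hE
      obtain ⟨C, D', hC, ⟨t, ht, rfl⟩, rfl⟩ := hE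
      set D := g ⁻¹' t with hD_def
      have hD : MeasurableSet D := hg ht
      have hCm : MeasurableSet C := hm' _ hC
      have hprod := h s t hs ht
      have hint2 : Integrable ((μ⟦A | m'⟧) * D.indicator (fun _ => (1 : ℝ))) μ := by
        rw [← indicator_mul_indicator_one]
        exact integrable_condExp.indicator hD
      calc ∫ x in C ∩ D, (μ⟦A | m'⟧) x ∂μ
          = ∫ x in C, D.indicator (μ⟦A | m'⟧) x ∂μ := (setIntegral_indicator hD).symm
        _ = ∫ x in C, ((μ⟦A | m'⟧) * D.indicator (fun _ => (1 : ℝ))) x ∂μ := by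
            rw [← indicator_mul_indicator_one]
        _ = ∫ x in C, (μ[(μ⟦A | m'⟧) * D.indicator (fun _ => (1 : ℝ)) | m']) x ∂μ :=
            (setIntegral_condExp hm' hint2 hC).symm
        _ = ∫ x in C, (μ⟦A ∩ D | m'⟧) x ∂μ := by
            refine integral_congr_ae (ae_restrict_of_ae ?_)
            have h1 : (μ[(μ⟦A | m'⟧) * D.indicator (fun _ => (1 : ℝ)) | m'])
                =ᵐ[μ] (μ⟦A | m'⟧) * (μ⟦D | m'⟧) :=
              condExp_mul_of_stronglyMeasurable_left stronglyMeasurable_condExp hint2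
                ((integrable_const (1 : ℝ)).indicator hD)
            refine h1.trans ?_
            filter_upwards [hprod] with x hx
            exact (hx).symm
        _ = ∫ x in C, (A ∩ D).indicator (fun _ => (1 : ℝ)) x ∂μ :=
            setIntegral_condExp hm' ((integrable_const (1 : ℝ)).indicator (hA.inter hD)) hC
        _ = ∫ x in C, D.indicator (A.indicator (fun _ => (1 : ℝ))) x ∂μ := by
            congr 1
            funext x
            by_cases hxA : x ∈ A <;> by_cases hxD : x ∈ D <;>
              simp [Set.indicator_apply, hxA, hxD]
        _ = ∫ x in C ∩ D, A.indicator (fun _ => (1 : ℝ)) x ∂μ := setIntegral_indicator hD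
    · rintro E hEm hE
      have hEM : MeasurableSet E := hm'' _ hEm
      have e1 := integral_add_compl hEM (integrable_condExp (μ := μ) (m := m') (f := A.indicator (fun _ => (1:ℝ))))
      have e2 := integral_add_compl hEM hint
      have e3 : ∫ x, (μ⟦A | m'⟧) x ∂μ = ∫ x, A.indicator (fun _ => (1:ℝ)) x ∂μ :=
        integral_condExp hm'
      linarith
    · rintro F hdisj hFm hF
      have hFM : ∀ i, MeasurableSet (F i) := fun i => hm'' _ (hFm i)
      rw [integral_iUnion hFM hdisj integrable_condExp.integrableOn,
        integral_iUnion hFM hdisj hint.integrableOn]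
      exact tsum_congr hF
  · intro h s t hs ht
    set A := f ⁻¹' s with hA_def
    set B := g ⁻¹' t with hB_def
    have hA : MeasurableSet A := hf hs
    have hB : MeasurableSet B := hg ht
    have hBm'' : MeasurableSet[m' ⊔ mγ.comap g] B :=
      (le_sup_right : mγ.comap g ≤ m' ⊔ mγ.comap g) _ ⟨t, ht, rfl⟩
    have hintA : Integrable (A.indicator (fun _ => (1 : ℝ))) μ :=
      (integrable_const (1 : ℝ)).indicator hA
    have hintB : Integrable (B.indicator (fun _ => (1 : ℝ))) μ :=
      (integrable_const (1 : ℝ)).indicator hB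
    have hiBA : Integrable (B.indicator (fun _ => (1 : ℝ)) * A.indicator (fun _ => (1 : ℝ))) μ := by
      rw [← inter_indicator_one']
      exact (integrable_const (1 : ℝ)).indicator (hB.inter hA)
    have step1 : (μ⟦A ∩ B | m'⟧) = μ[B.indicator (fun _ => (1:ℝ)) * A.indicator (fun _ => (1:ℝ)) | m'] := by
      rw [Set.inter_comm A B, inter_indicator_one']
    have step2 : μ[B.indicator (fun _ => (1:ℝ)) * A.indicator (fun _ => (1:ℝ)) | m']
        =ᵐ[μ] μ[μ[B.indicator (fun _ => (1:ℝ)) * A.indicator (fun _ => (1:ℝ)) | m' ⊔ mγ.comap g] | m'] :=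
      (condExp_condExp_of_le le_sup_left hm'').symm
    have step3 : μ[B.indicator (fun _ => (1:ℝ)) * A.indicator (fun _ => (1:ℝ)) | m' ⊔ mγ.comap g]
        =ᵐ[μ] B.indicator (fun _ => (1:ℝ)) * (μ⟦A | m' ⊔ mγ.comap g⟧) :=
      condExp_mul_of_stronglyMeasurable_left
        ((stronglyMeasurable_const (β := ℝ)).indicator hBm'') hiBA hintA
    have step4 : B.indicator (fun _ => (1:ℝ)) * (μ⟦A | m' ⊔ mγ.comap g⟧)
        =ᵐ[μ] B.indicator (fun _ => (1:ℝ)) * (μ⟦A | m'⟧) := by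
      filter_upwards [h s hs] with x hx
      simp only [Pi.mul_apply]
      exact congrArg (B.indicator (fun _ => (1:ℝ)) x * ·) hx
    have step5 : μ[μ[B.indicator (fun _ => (1:ℝ)) * A.indicator (fun _ => (1:ℝ)) | m' ⊔ mγ.comap g] | m']
        =ᵐ[μ] μ[(μ⟦A | m'⟧) * B.indicator (fun _ => (1:ℝ)) | m'] := by
      refine condExp_congr_ae ((step3.trans step4).trans ?_)
      filter_upwards with x
      simp [mul_comm]
    have hiAB : Integrable ((μ⟦A | m'⟧) * B.indicator (fun _ => (1:ℝ))) μ := by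
      rw [← indicator_mul_indicator_one]
      exact integrable_condExp.indicator hB
    have step6 : μ[(μ⟦A | m'⟧) * B.indicator (fun _ => (1:ℝ)) | m']
        =ᵐ[μ] (μ⟦A | m'⟧) * (μ⟦B | m'⟧) :=
      condExp_mul_of_stronglyMeasurable_left stronglyMeasurable_condExp hiAB hintB
    calc (μ⟦A ∩ B | m'⟧)
        =ᵐ[μ] μ[μ[B.indicator (fun _ => (1:ℝ)) * A.indicator (fun _ => (1:ℝ)) | m' ⊔ mγ.comap g] | m'] := by
          rw [step1]; exact step2
      _ =ᵐ[μ] (μ⟦A | m'⟧) * (μ⟦B | m'⟧) := step5.trans step6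
      _ = fun ω => (μ⟦A | m'⟧) ω * (μ⟦B | m'⟧) ω := rfl


lemma condexp_drop_mono {m₁ m₂ m₃ : MeasurableSpace Ω} (h12 : m₁ ≤ m₂) (h23 : m₂ ≤ m₃)
    (h3 : m₃ ≤ mΩ) {φ : Ω → ℝ}
    (h : μ[φ|m₃] =ᵐ[μ] μ[φ|m₁]) : μ[φ|m₂] =ᵐ[μ] μ[φ|m₁] := by
  have h2 : m₂ ≤ mΩ := h23.trans h3
  have t1 : μ[μ[φ|m₃]|m₂] =ᵐ[μ] μ[φ|m₂] := condExp_condExp_of_le h23 h3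
  have t2 : μ[μ[φ|m₃]|m₂] =ᵐ[μ] μ[μ[φ|m₁]|m₂] := condExp_congr_ae h
  have t3 : μ[μ[φ|m₁]|m₂] = μ[φ|m₁] :=
    condExp_of_stronglyMeasurable h2 (stronglyMeasurable_condExp.mono h12) integrable_condExp
  exact t1.symm.trans (t2.trans (by rw [t3]))

lemma CondIndepFun.symm' {β γ : Type*} [mβ : MeasurableSpace β] [mγ : MeasurableSpace γ]
    {hm' : m' ≤ mΩ} {f : Ω → β} {g : Ω → γ}
    (h : CondIndepFun m' hm' f g μ) : CondIndepFun m' hm' g f μ :=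
  ProbabilityTheory.Kernel.IndepFun.symm h

lemma condIndepFun_of_eq {m₁ m₂ : MeasurableSpace Ω} {β γ : Type*} [mβ : MeasurableSpace β]
    [mγ : MeasurableSpace γ] {f : Ω → β} {g : Ω → γ}
    (h₁ : m₁ ≤ mΩ) (h₂ : m₂ ≤ mΩ) (hm : m₁ = m₂)
    (h : CondIndepFun m₁ h₁ f g μ) : CondIndepFun m₂ h₂ f g μ := by
  subst hm; exact h

lemma condIndepFun_weak_union {β γ δ : Type*} [mβ : MeasurableSpace β] [mγ : MeasurableSpace γ]
    [mδ : MeasurableSpace δ] (hm' : m' ≤ mΩ)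
    {f : Ω → β} {g : Ω → γ} {h : Ω → δ}
    (hf : Measurable f) (hg : Measurable g) (hh : Measurable h)
    (hi : CondIndepFun m' hm' f (fun ω => (g ω, h ω)) μ) :
    CondIndepFun (m' ⊔ mγ.comap g) (sup_le hm' hg.comap_le) f h μ := by
  rw [condIndepFun_iff_condexp_drop (sup_le hm' hg.comap_le) hf hh]
  rw [condIndepFun_iff_condexp_drop hm' hf (hg.prodMk hh)] at hi
  intro s hs
  have h1 := hi s hs
  rw [comap_pair_eq g h] at h1
  have e : (m' ⊔ mγ.comap g) ⊔ mδ.comap h = m' ⊔ (mγ.comap g ⊔ mδ.comap h) := sup_assoc m' _ _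
  rw [e]
  have h2 : (μ⟦f ⁻¹' s | m' ⊔ mγ.comap g⟧) =ᵐ[μ] (μ⟦f ⁻¹' s | m'⟧) :=
    condexp_drop_mono le_sup_left (sup_le_sup_left le_sup_left m')
      (sup_le hm' (sup_le hg.comap_le hh.comap_le)) h1
  exact h1.trans h2.symm

lemma condIndepFun_of_comap_le {β γ : Type*} [mβ : MeasurableSpace β] [mγ : MeasurableSpace γ]
    (hm' : m' ≤ mΩ) {f : Ω → β} {g : Ω → γ} (hf : Measurable f) (hg : Measurable g)
    (hle : mβ.comap f ≤ m') : CondIndepFun m' hm' f g μ := by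
  rw [condIndepFun_iff_condexp_drop hm' hf hg]
  intro s hs
  have hsm' : MeasurableSet[m'] (f ⁻¹' s) := hle _ ⟨s, hs, rfl⟩
  have hsm'' : MeasurableSet[m' ⊔ mγ.comap g] (f ⁻¹' s) :=
    (le_sup_left : m' ≤ m' ⊔ mγ.comap g) _ hsm'
  rw [condExp_of_stronglyMeasurable (sup_le hm' hg.comap_le)
      ((stronglyMeasurable_const (β := ℝ)).indicator hsm'')
      ((integrable_const (1 : ℝ)).indicator (hm' _ hsm')),
    condExp_of_stronglyMeasurable hm'
      ((stronglyMeasurable_const (β := ℝ)).indicator hsm')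
      ((integrable_const (1 : ℝ)).indicator (hm' _ hsm'))]

end CMAux

/-- If a stochastic sequence is `[k1,N]`-CM_F for every `k1` and is CM_L, then it
is `[k1,N]`-CM_F and `[0,k2]`-CM_L for all `k1, k2`. -/
theorem stmt_7 {Ω : Type*} [MeasurableSpace Ω] [StandardBorelSpace Ω] [Nonempty Ω]
    (μ : Measure Ω) [IsProbabilityMeasure μ] {N d : ℕ}
    (X : Fin (N + 1) → Ω → (Fin d → ℝ)) (hX : ∀ k, Measurable (X k))
    (hCMF : ∀ k1 : Fin (N + 1), CMPaper.IsCMcOn μ X hX k1 (Fin.last N) k1)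
    (hCML : CMPaper.IsCMcOn μ X hX 0 (Fin.last N) (Fin.last N)) :
    ∀ k1 k2 : Fin (N + 1),
      CMPaper.IsCMcOn μ X hX k1 (Fin.last N) k1 ∧ CMPaper.IsCMcOn μ X hX 0 k2 k2 := by
  intro k1 k2
  refine ⟨hCMF k1, ?_⟩
  intro j k hj hjk hk
  -- notation
  have hP : ∀ (j' : Fin (N + 1)),
      Measurable (fun ω (i : {i : Fin (N + 1) // 0 ≤ i ∧ i < j'}) => X i.1 ω) :=
    fun j' => measurable_pi_lambda _ (fun i => hX i.1)
  by_cases hk2N : k2 = Fin.last N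
  · subst hk2N
    exact hCML j k hj hjk hk
  have hk2N' : k2 < Fin.last N := lt_of_le_of_ne (Fin.le_last k2) hk2N
  by_cases hkk2 : k = k2
  · subst hkk2
    refine CMAux.condIndepFun_of_comap_le _ (hX k) (hP j) ?_
    rw [CMAux.comap_pair_eq (X j) (X k)]
    exact le_sup_right
  have hkk2' : k < k2 := lt_of_le_of_ne hk hkk2
  -- σ-algebras
  set σj := MeasurableSpace.comap (X j) inferInstance with hσj
  set σk := MeasurableSpace.comap (X k) inferInstance with hσk
  set σk2 := MeasurableSpace.comap (X k2) inferInstance with hσk2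
  set σN := MeasurableSpace.comap (X (Fin.last N)) inferInstance with hσN
  have hσj' : σj ≤ _ := (hX j).comap_le
  have hσk' : σk ≤ _ := (hX k).comap_le
  have hσk2' : σk2 ≤ _ := (hX k2).comap_le
  have hσN' : σN ≤ _ := (hX (Fin.last N)).comap_le
  have hJN : σj ⊔ σN ≤ _ := sup_le hσj' hσN'
  have hKN : σk ⊔ σN ≤ _ := sup_le hσk' hσN'
  have hJK2 : σj ⊔ σk2 ≤ _ := sup_le hσj' hσk2'
  -- h1 : X k ⊥ past_j | (X j, X N)
  have h1 : CondIndepFun (σj ⊔ σN) hJN (X k)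
      (fun ω (i : {i : Fin (N + 1) // 0 ≤ i ∧ i < j}) => X i.1 ω) μ :=
    CMAux.condIndepFun_of_eq _ hJN (CMAux.comap_pair_eq (X j) (X (Fin.last N)))
      (hCML j k (Fin.zero_le _) hjk (Fin.le_last _))
  -- h2 : X k2 ⊥ past_k | (X k, X N)
  have h2 : CondIndepFun (σk ⊔ σN) hKN (X k2)
      (fun ω (i : {i : Fin (N + 1) // 0 ≤ i ∧ i < k}) => X i.1 ω) μ :=
    CMAux.condIndepFun_of_eq _ hKN (CMAux.comap_pair_eq (X k) (X (Fin.last N)))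
      (hCML k k2 (Fin.zero_le _) hkk2' (Fin.le_last _))
  -- h3 : X k2 ⊥ (X j, past_j) | (X k, X N)
  have ψm : Measurable (fun (v : {i : Fin (N + 1) // 0 ≤ i ∧ i < k} → (Fin d → ℝ)) =>
      ((v ⟨j, ⟨Fin.zero_le _, hjk⟩⟩ : Fin d → ℝ),
        fun (i : {i : Fin (N + 1) // 0 ≤ i ∧ i < j}) =>
          v ⟨i.1, ⟨Fin.zero_le _, lt_trans i.2.2 hjk⟩⟩)) :=
    (measurable_pi_apply _).prodMk (measurable_pi_lambda _ (fun i => measurable_pi_apply _))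
  have h3 : CondIndepFun (σk ⊔ σN) hKN (X k2)
      (fun ω => (X j ω, fun (i : {i : Fin (N + 1) // 0 ≤ i ∧ i < j}) => X i.1 ω)) μ :=
    h2.comp measurable_id ψm
  -- h4 : X k2 ⊥ past_j | (X k, X N, X j)
  have h4 := CMAux.condIndepFun_weak_union hKN (hX k2) (hX j) (hP j) h3
  have E1 : (σk ⊔ σN) ⊔ σj = (σj ⊔ σN) ⊔ σk := by
    rw [sup_comm σk σN, sup_assoc, sup_comm σk σj, ← sup_assoc, sup_comm σN σj]
  have h4' : CondIndepFun ((σj ⊔ σN) ⊔ σk) (sup_le hJN hσk') (X k2)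
      (fun ω (i : {i : Fin (N + 1) // 0 ≤ i ∧ i < j}) => X i.1 ω) μ :=
    CMAux.condIndepFun_of_eq _ _ E1 h4
  -- drop forms
  have d1 := (CMAux.condIndepFun_iff_condexp_drop hJN (hP j) (hX k)).mp (CMAux.CondIndepFun.symm' h1)
  have d4 := (CMAux.condIndepFun_iff_condexp_drop (sup_le hJN hσk') (hP j) (hX k2)).mp (CMAux.CondIndepFun.symm' h4')
  -- h5 : past_j ⊥ (X k, X k2) | (X j, X N)
  have h5 : CondIndepFun (σj ⊔ σN) hJN
      (fun ω (i : {i : Fin (N + 1) // 0 ≤ i ∧ i < j}) => X i.1 ω)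
      (fun ω => (X k ω, X k2 ω)) μ := by
    rw [CMAux.condIndepFun_iff_condexp_drop hJN (hP j) ((hX k).prodMk (hX k2))]
    intro s hs
    rw [CMAux.comap_pair_eq (X k) (X k2), ← sup_assoc]
    exact (d4 s hs).trans (d1 s hs)
  have h5s : CondIndepFun (σj ⊔ σN) hJN
      (fun ω (i : {i : Fin (N + 1) // 0 ≤ i ∧ i < j}) => X i.1 ω)
      (fun ω => (X k2 ω, X k ω)) μ :=
    h5.comp measurable_id measurable_swap
  -- h6 : past_j ⊥ X k | (X j, X N, X k2)
  have h6 := CMAux.condIndepFun_weak_union hJN (hP j) (hX k2) (hX k) h5s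
  -- h8 : X N ⊥ middle block | (X k2, X j)  (from CM_F at k1 = j)
  have h8 := hCMF j k2 (Fin.last N) (le_of_lt (lt_trans hjk hkk2')) hk2N' (le_refl _)
  have h8a : CondIndepFun
      (MeasurableSpace.comap (fun ω => (X k2 ω, X j ω)) inferInstance)
      (((hX k2).prodMk (hX j)).comap_le) (X (Fin.last N)) (X k) μ :=
    h8.comp measurable_id
      (measurable_pi_apply (⟨k, ⟨le_of_lt hjk, hkk2'⟩⟩ : {i : Fin (N + 1) // j ≤ i ∧ i < k2}))
  have h8b : CondIndepFun (σj ⊔ σk2) hJK2 (X k) (X (Fin.last N)) μ :=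
    CMAux.CondIndepFun.symm' (CMAux.condIndepFun_of_eq _ hJK2
      (by rw [CMAux.comap_pair_eq (X k2) (X j)]; exact sup_comm _ _) h8a)
  have d8 := (CMAux.condIndepFun_iff_condexp_drop hJK2 (hX k) (hX (Fin.last N))).mp h8b
  have d6 := (CMAux.condIndepFun_iff_condexp_drop (sup_le hJN hσk2') (hX k)
      (hP j)).mp (CMAux.CondIndepFun.symm' h6)
  have E2 : (σj ⊔ σN) ⊔ σk2 = (σj ⊔ σk2) ⊔ σN := by
    rw [sup_assoc, sup_comm σN σk2, ← sup_assoc]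
  rw [E2] at d6
  have d10 : ∀ s, MeasurableSet s →
      (μ⟦(X k) ⁻¹' s | (σj ⊔ σk2) ⊔ MeasurableSpace.comap
        (fun ω (i : {i : Fin (N + 1) // 0 ≤ i ∧ i < j}) => X i.1 ω) inferInstance⟧)
        =ᵐ[μ] (μ⟦(X k) ⁻¹' s | σj ⊔ σk2⟧) := by
    intro s hs
    refine CMAux.condexp_drop_mono le_sup_left (sup_le_sup_right le_sup_left _)
      (sup_le (sup_le hJK2 hσN') (hP j).comap_le) ?_
    exact (d6 s hs).trans (d8 s hs)
  have final : CondIndepFun (σj ⊔ σk2) hJK2 (X k)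
      (fun ω (i : {i : Fin (N + 1) // 0 ≤ i ∧ i < j}) => X i.1 ω) μ :=
    (CMAux.condIndepFun_iff_condexp_drop hJK2 (hX k) (hP j)).mpr d10
  exact CMAux.condIndepFun_of_eq hJK2 _ (CMAux.comap_pair_eq (X j) (X k2)).symm final
end
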